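/- Let D ⊆ ℂ × ℂ be a nonempty open connected set, let D₁ := Prod.fst '' D and D₂ := Prod.snd '' D, and for an index type S let (g_s : D₁ → ℂ) and (h_s : D₂ → ℂ) be families of holomorphic functions; define F_s : D → ℂ × ℂ by F_s(w₁, w₂) = (g_s(w₁), h_s(w₂)). Then the family {F_s} is normal on D if and only if {g_s} is normal on D₁ and {h_s} is normal on D₂. -/

import Mathlib

open Filter Metric Set Topology

/-- A family `F : ι → α → β` of functions is normal on a set `U` if every sequence in the
family has a subsequence converging uniformly on every compact subset of `U` to some limit
function. -/
def NormalOn {α β ι : Type*} [TopologicalSpace α] [UniformSpace β]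
    (F : ι → α → β) (U : Set α) : Prop :=
  ∀ u : ℕ → ι, ∃ φ : ℕ → ℕ, StrictMono φ ∧ ∃ f : α → β,
    ∀ K : Set α, K ⊆ U → IsCompact K →
      TendstoUniformlyOn (fun n => F (u (φ n))) f Filter.atTop K

/-- If a sequence depending only on the first coordinate converges uniformly on compact subsets
of an open set `D`, then the one-variable family converges uniformly on compact subsets of
`Prod.fst '' D`. -/
lemma aux_fst (D : Set (ℂ × ℂ)) (hD : IsOpen D)
    (G : ℕ → ℂ → ℂ) (f : ℂ × ℂ → ℂ)
    (hf : ∀ K ⊆ D, IsCompact K → TendstoUniformlyOn (fun n (w : ℂ × ℂ) => G n w.1) f atTop K) :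
    ∃ f₁ : ℂ → ℂ, ∀ K₁ ⊆ Prod.fst '' D, IsCompact K₁ →
      TendstoUniformlyOn G f₁ atTop K₁ := by
  refine ⟨fun x => limUnder atTop (fun n => G n x), ?_⟩
  intro K₁ hK₁D hK₁
  have hcov : ∀ x ∈ K₁, ∃ y r, 0 < r ∧ closedBall x r ×ˢ closedBall y r ⊆ D := by
    intro x hx
    obtain ⟨⟨x', y⟩, hmem, hxeq⟩ := hK₁D hx
    subst hxeq
    obtain ⟨ε, hε, hball⟩ := Metric.isOpen_iff.1 hD _ hmem
    refine ⟨y, ε / 2, by positivity, fun p hp => hball ?_⟩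
    have hle : dist p (x', y) ≤ ε / 2 := by
      rw [Prod.dist_eq]
      exact max_le hp.1 hp.2
    exact lt_of_le_of_lt hle (by linarith)
  choose! y r hr hsub using hcov
  obtain ⟨t, htK, hcover⟩ := hK₁.elim_nhds_subcover (fun x => ball x (r x))
    (fun x hx => ball_mem_nhds x (hr x hx))
  set Kbig : Set (ℂ × ℂ) := ⋃ x ∈ t, (K₁ ∩ closedBall x (r x)) ×ˢ ({y x} : Set ℂ)
  have hKbigD : Kbig ⊆ D := by
    intro p hp
    simp only [Kbig, Set.mem_iUnion] at hp
    obtain ⟨x, hxt, hp⟩ := hp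
    have hxK : x ∈ K₁ := htK x hxt
    have : p ∈ closedBall x (r x) ×ˢ closedBall (y x) (r x) := by
      refine ⟨hp.1.2, ?_⟩
      have : p.2 = y x := hp.2
      simp [this, (hr x hxK).le]
    exact hsub x hxK this
  have hKbigC : IsCompact Kbig :=
    t.finite_toSet.isCompact_biUnion fun x _ =>
      (hK₁.inter_right Metric.isClosed_closedBall).prod isCompact_singleton
  have H := hf Kbig hKbigD hKbigC
  rw [Metric.tendstoUniformlyOn_iff]
  intro ε hε
  have H' := Metric.tendstoUniformlyOn_iff.1 H ε hε
  filter_upwards [H'] with n hn a ha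
  obtain ⟨x, hxt, hax⟩ := Set.mem_iUnion₂.1 (hcover ha)
  have hxK : x ∈ K₁ := htK x hxt
  have hpK : (a, y x) ∈ Kbig :=
    Set.mem_biUnion hxt ⟨⟨ha, ball_subset_closedBall hax⟩, rfl⟩
  have hkey := hn (a, y x) hpK
  have hpD : (a, y x) ∈ D := hKbigD hpK
  have hpt : Tendsto (fun n => G n a) atTop (𝓝 (f (a, y x))) := by
    have := (hf {(a, y x)} (by simpa using hpD) isCompact_singleton).tendsto_at
      (Set.mem_singleton _)
    simpa using this
  have hlim : limUnder atTop (fun n => G n a) = f (a, y x) := hpt.limUnder_eq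
  simpa [hlim] using hkey

/-- A family of split-form bicomplex holomorphic functions is normal on an arbitrary bicomplex
domain `D` if and only if both component families are normal on the coordinate projections
`D₁ = Prod.fst '' D` and `D₂ = Prod.snd '' D`. -/
theorem stmt10 {S : Type*} (D : Set (ℂ × ℂ)) (hD : IsOpen D) (hconn : IsConnected D)
    (g h : S → ℂ → ℂ)
    (hg : ∀ s, DifferentiableOn ℂ (g s) (Prod.fst '' D))
    (hh : ∀ s, DifferentiableOn ℂ (h s) (Prod.snd '' D)) :
    NormalOn (fun s => fun w : ℂ × ℂ => (g s w.1, h s w.2)) D ↔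
      (NormalOn g (Prod.fst '' D) ∧ NormalOn h (Prod.snd '' D)) := by
  constructor
  · intro hF
    constructor
    · intro u
      obtain ⟨φ, hφ, f, hf⟩ := hF u
      have hf1 : ∀ K ⊆ D, IsCompact K →
          TendstoUniformlyOn (fun n (w : ℂ × ℂ) => g (u (φ n)) w.1) (fun w => (f w).1) atTop K := by
        intro K hKD hKc
        have := uniformContinuous_fst.comp_tendstoUniformlyOn (hf K hKD hKc)
        simpa [Function.comp_def] using this
      obtain ⟨f₁, hf₁⟩ := aux_fst D hD _ _ hf1
      exact ⟨φ, hφ, f₁, hf₁⟩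
    · intro u
      obtain ⟨φ, hφ, f, hf⟩ := hF u
      have hE : IsOpen (Prod.swap '' D) := by
        rw [Set.image_swap_eq_preimage_swap]
        exact hD.preimage continuous_swap
      have hf2 : ∀ K ⊆ Prod.swap '' D, IsCompact K →
          TendstoUniformlyOn (fun n (w : ℂ × ℂ) => h (u (φ n)) w.1)
            (fun w => (f w.swap).2) atTop K := by
        intro K hKD hKc
        have hKD' : Prod.swap '' K ⊆ D := by
          intro p hp
          obtain ⟨q, hq, rfl⟩ := hp
          obtain ⟨p', hp', hq'⟩ := hKD hq
          rw [← hq']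
          simpa using hp'
        have h1 := (hf (Prod.swap '' K) hKD' (hKc.image continuous_swap)).comp Prod.swap
        have h2 := uniformContinuous_snd.comp_tendstoUniformlyOn h1
        have hmono : K ⊆ Prod.swap ⁻¹' (Prod.swap '' K) := fun q hq => Set.mem_image_of_mem _ hq
        have := h2.mono hmono
        simpa [Function.comp_def] using this
      obtain ⟨f₂, hf₂⟩ := aux_fst _ hE _ _ hf2
      have himg : Prod.fst '' (Prod.swap '' D) = Prod.snd '' D := by
        ext x
        constructor
        · rintro ⟨q, ⟨p, hp, rfl⟩, rfl⟩
          exact ⟨p, hp, rfl⟩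
        · rintro ⟨p, hp, rfl⟩
          exact ⟨p.swap, ⟨p, hp, rfl⟩, rfl⟩
      exact ⟨φ, hφ, f₂, fun K hK hKc => hf₂ K (himg ▸ hK) hKc⟩
  · rintro ⟨hg', hh'⟩ u
    obtain ⟨φ, hφ, f₁, hf₁⟩ := hg' u
    obtain ⟨ψ, hψ, f₂, hf₂⟩ := hh' (u ∘ φ)
    refine ⟨φ ∘ ψ, hφ.comp hψ, fun w => (f₁ w.1, f₂ w.2), ?_⟩
    intro K hK hKc
    have h1 : TendstoUniformlyOn (fun n x => g (u (φ (ψ n))) x) f₁ atTop (Prod.fst '' K) := by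
      have base := hf₁ (Prod.fst '' K) (Set.image_mono hK) (hKc.image continuous_fst)
      intro V hV
      exact hψ.tendsto_atTop.eventually (base V hV)
    have h2 := hf₂ (Prod.snd '' K) (Set.image_mono hK) (hKc.image continuous_snd)
    rw [Metric.tendstoUniformlyOn_iff]
    intro ε hε
    filter_upwards [Metric.tendstoUniformlyOn_iff.1 h1 ε hε,
      Metric.tendstoUniformlyOn_iff.1 h2 ε hε] with n hn1 hn2 w hw
    have d1 := hn1 w.1 (Set.mem_image_of_mem _ hw)
    have d2 := hn2 w.2 (Set.mem_image_of_mem _ hw)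
    rw [Prod.dist_eq]
    exact max_lt d1 d2
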